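/- (Three long links.) Let a = (a_1,…,a_n) with n ≥ 5 and a_1 ≥ a_2 ≥ … ≥ a_n > 0, set L := Σ_{i=1}^n a_i, and assume that a_i + a_j > L/2 for every pair of distinct indices i, j ∈ {1,2,3}. Then P(a) ⊆ Q(a); in particular, the diagonal space satisfies DS(a) = P(a) ∩ Q(a) = P(a). -/
import Mathlib


/-- `R_k^min = max_{1 ≤ i ≤ k} (2 a_i − Σ_{j=1}^k a_j)`. -/
noncomputable def Rmin (a : ℕ → ℝ) (k : ℕ) : ℝ :=
  sSup ((fun i => 2 * a i - ∑ j ∈ Finset.Icc 1 k, a j) '' Set.Icc 1 k)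

/-- Three long links: if the links are ordered `a_1 ≥ a_2 ≥ … ≥ a_n > 0`, `n ≥ 5`, and
`a_i + a_j > L/2` (with `L = Σ a_i`) for all distinct `i, j ∈ {1,2,3}`, then the polytope
`P(a)` (nonnegative vectors `(L_2,…,L_{n-2})` with `L_{n-1} := a_n` satisfying the nested
inequalities `|L_{n-k} − a_{n-k}| ≤ L_{n-k-1} ≤ L_{n-k} + a_{n-k}` for `1 ≤ k ≤ n−3`) is
contained in the cuboid `Q(a)` given by
`max(0, R_{n-k-1}^min) ≤ L_{n-k-1} ≤ R_{n-k-1}^max`; in particular `DS(a) = P(a) ∩ Q(a) = P(a)`. -/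
theorem threeLongLinks_P_subset_Q
    (n : ℕ) (hn : 5 ≤ n) (a : ℕ → ℝ)
    (ha : ∀ i, 1 ≤ i → i ≤ n → 0 < a i)
    (hord : ∀ i j, 1 ≤ i → i ≤ j → j ≤ n → a j ≤ a i)
    (hlong : ∀ i j, i ∈ ({1, 2, 3} : Set ℕ) → j ∈ ({1, 2, 3} : Set ℕ) → i ≠ j →
      (∑ l ∈ Finset.Icc 1 n, a l) / 2 < a i + a j) :
    ∀ L : ℕ → ℝ,
      (∀ k, 2 ≤ k → k ≤ n - 2 → 0 ≤ L k) →
      L (n - 1) = a n →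
      (∀ k, 1 ≤ k → k ≤ n - 3 →
        |L (n - k) - a (n - k)| ≤ L (n - k - 1) ∧
        L (n - k - 1) ≤ L (n - k) + a (n - k)) →
      (∀ k, 1 ≤ k → k ≤ n - 3 →
        max 0 (Rmin a (n - k - 1)) ≤ L (n - k - 1) ∧
        L (n - k - 1) ≤ ∑ j ∈ Finset.Icc 1 (n - k - 1), a j) := by
  intro L hL0 hLn h3
  set S : ℝ := ∑ l ∈ Finset.Icc 1 n, a l with hS
  have hIcc : ∀ m : ℕ, Finset.Icc 1 m = Finset.Ioc 0 m := fun m => by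
    ext x; simp only [Finset.mem_Icc, Finset.mem_Ioc]; omega
  have hsplit : ∀ m, m ≤ n →
      (∑ j ∈ Finset.Icc 1 m, a j) + ∑ j ∈ Finset.Ioc m n, a j = S := by
    intro m hm
    rw [hS, hIcc, hIcc]
    exact Finset.sum_Ioc_consecutive _ (Nat.zero_le m) hm
  have htail_nonneg : ∀ m, (0:ℝ) ≤ ∑ j ∈ Finset.Ioc m n, a j := fun m =>
    Finset.sum_nonneg fun j hj => by
      simp only [Finset.mem_Ioc] at hj; exact (ha j (by omega) hj.2).le
  -- upper chain
  have hup : ∀ t m, m + t = n - 1 → 2 ≤ m → L m ≤ ∑ j ∈ Finset.Ioc m n, a j := by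
    intro t
    induction t with
    | zero =>
      intro m hm _
      have hmeq : m = n - 1 := by omega
      subst hmeq
      have hioc : Finset.Ioc (n-1) n = {n} := by
        ext x; simp only [Finset.mem_Ioc, Finset.mem_singleton]; omega
      rw [hLn, hioc, Finset.sum_singleton]
    | succ t ih =>
      intro m hm hm2
      have ihm := ih (m+1) (by omega) (by omega)
      obtain ⟨_, h2⟩ := h3 (n - m - 1) (by omega) (by omega)
      have e1 : n - (n - m - 1) = m + 1 := by omega
      have e2 : n - (n - m - 1) - 1 = m := by omega
      rw [e2, e1] at h2
      have hsum : ∑ j ∈ Finset.Ioc m n, a j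
          = a (m+1) + ∑ j ∈ Finset.Ioc (m+1) n, a j := by
        rw [← Finset.sum_Ioc_consecutive a (Nat.le_succ m) (show m+1 ≤ n by omega)]
        congr 1
        have : Finset.Ioc m (m+1) = {m+1} := by
          ext x; simp only [Finset.mem_Ioc, Finset.mem_singleton]; omega
        rw [this, Finset.sum_singleton]
      rw [hsum]; linarith
  -- Rmin formula
  have hRmin : ∀ m, 1 ≤ m → m ≤ n →
      Rmin a m = 2 * a 1 - ∑ j ∈ Finset.Icc 1 m, a j := by
    intro m h1 h2
    apply IsGreatest.csSup_eq
    constructor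
    · exact ⟨1, Set.mem_Icc.mpr ⟨le_refl 1, h1⟩, rfl⟩
    · rintro x ⟨i, hi, rfl⟩
      rw [Set.mem_Icc] at hi
      have := hord 1 i (le_refl 1) hi.1 (hi.2.trans h2)
      simp only
      linarith
  have hIcc2 : ∑ j ∈ Finset.Icc 1 2, a j = a 1 + a 2 := by
    have : Finset.Icc 1 2 = {1, 2} := by decide
    rw [this, Finset.sum_pair (by norm_num)]
  have hIcc3 : ∑ j ∈ Finset.Icc 1 3, a j = a 1 + a 2 + a 3 := by
    have : Finset.Icc 1 3 = {1, 2, 3} := by decide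
    rw [this, Finset.sum_insert (by decide), Finset.sum_pair (by norm_num)]
    ring
  have h12 := hlong 1 2 (by simp) (by simp) (by norm_num)
  have h23 := hlong 2 3 (by simp) (by simp) (by norm_num)
  have hsp2 := hsplit 2 (by omega)
  have hsp3 := hsplit 3 (by omega)
  intro k hk1 hk2
  set m := n - k - 1 with hm
  have hm2 : 2 ≤ m := by omega
  have hmn : m ≤ n - 2 := by omega
  have hupm : L m ≤ ∑ j ∈ Finset.Ioc m n, a j := hup (n - 1 - m) m (by omega) hm2
  have htail_mono : ∑ j ∈ Finset.Ioc m n, a j ≤ ∑ j ∈ Finset.Ioc 2 n, a j := by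
    apply Finset.sum_le_sum_of_subset_of_nonneg
    · intro x hx; simp only [Finset.mem_Ioc] at *; omega
    · intro j hj _
      simp only [Finset.mem_Ioc] at hj
      exact (ha j (by omega) hj.2).le
  have hB : a 1 + a 2 ≤ ∑ j ∈ Finset.Icc 1 m, a j := by
    rw [← hIcc2]
    apply Finset.sum_le_sum_of_subset_of_nonneg
    · intro x hx; simp only [Finset.mem_Icc] at *; omega
    · intro j hj _
      simp only [Finset.mem_Icc] at hj
      exact (ha j hj.1 (by omega)).le
  refine ⟨?_, by linarith⟩
  refine max_le (hL0 m hm2 hmn) ?_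
  rw [hRmin m (by omega) (by omega)]
  by_cases hm3 : 3 ≤ m
  · have hC : a 1 + a 2 + a 3 ≤ ∑ j ∈ Finset.Icc 1 m, a j := by
      rw [← hIcc3]
      apply Finset.sum_le_sum_of_subset_of_nonneg
      · intro x hx; simp only [Finset.mem_Icc] at *; omega
      · intro j hj _
        simp only [Finset.mem_Icc] at hj
        exact (ha j hj.1 (by omega)).le
    have ha1 : a 1 ≤ a 2 + a 3 := by
      have h1 : a 1 + a 2 + a 3 ≤ S := by
        rw [← hsp3, hIcc3]; linarith [htail_nonneg 3]
      linarith
    linarith [hL0 m hm2 hmn]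
  · have hm2' : m = 2 := by omega
    obtain ⟨hab, _⟩ := h3 k hk1 hk2
    have e1 : n - k = 3 := by omega
    have e2 : n - k - 1 = 2 := by omega
    rw [e2, e1] at hab
    have habs : a 3 - L 3 ≤ |L 3 - a 3| := by
      rw [abs_sub_comm]; exact le_abs_self _
    have hL3 : L 3 ≤ ∑ j ∈ Finset.Ioc 3 n, a j := hup (n - 4) 3 (by omega) (by norm_num)
    rw [hm2', hIcc2]
    linarith
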